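/- arXiv:1610.08824 — 2 statements merged into one kernel-verified Lean document; each statement's English description precedes it below -/
import Mathlib

section
/- Let ρ > 0, q ≥ 1, let t₀ < t₁ < ⋯ < t_q = 1 and w₀,…,w_q be the nodes and weights of the right-sided Gauß–Radau quadrature with q+1 nodes on (0,1] with weighting function t ↦ e^{−2ρt} (exact for polynomials of degree ≤ 2q). Let H be a real Hilbert space, p an H-valued polynomial of degree ≤ q on (0,1), and let p̃ be the Lagrange interpolant at the nodes (t_i) of the function t ↦ p(t)/t. Then ⟨p′, p̃⟩_ρ + ⟨p(0), p̃(0)⟩_H ≥ (1/2)( |p(1)|_H² e^{−2ρ} + ⟨p̃, p̃⟩_ρ ) + ρ⟨p, p̃⟩_ρ ≥ (1/2)( |p(1)|_H² e^{−2ρ} + ⟨p, p⟩_ρ ) + ρ⟨p, p⟩_ρ, where ⟨a,b⟩_ρ = ∫₀¹ ⟨a(t), b(t)⟩_H e^{−2ρt} dt. -/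
open MeasureTheory Real
open scoped RealInnerProductSpace

/-- `f` is an `H`-valued polynomial of degree at most `q`. -/
def IsPolyDeg {H : Type*} [NormedAddCommGroup H] [InnerProductSpace ℝ H]
    (q : ℕ) (f : ℝ → H) : Prop :=
  ∃ c : Fin (q + 1) → H, ∀ s : ℝ, f s = ∑ i : Fin (q + 1), s ^ (i : ℕ) • c i

/-- The right-sided Gauß–Radau quadrature with `q+1` nodes on `(0,1]` with weighting
function `t ↦ exp(-2ρt)`: nodes `0 < t₀ < ⋯ < t_q = 1`, positive weights, exact for
polynomials of degree at most `2q`. -/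
def IsGaussRadau01 (q : ℕ) (ρ : ℝ) (t w : Fin (q + 1) → ℝ) : Prop :=
  (∀ i, t i ∈ Set.Ioc (0 : ℝ) 1) ∧ StrictMono t ∧ t (Fin.last q) = 1 ∧ (∀ i, 0 < w i) ∧
    ∀ p : Polynomial ℝ, p.natDegree ≤ 2 * q →
      ∫ x in Set.Ioo (0 : ℝ) 1, p.eval x * Real.exp (-2 * ρ * x) = ∑ i, w i * p.eval (t i)


open Polynomial

noncomputable def innerPoly {H : Type*} [NormedAddCommGroup H] [InnerProductSpace ℝ H]
    (q : ℕ) (c d : Fin (q + 1) → H) : Polynomial ℝ :=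
  ∑ i : Fin (q + 1), ∑ j : Fin (q + 1), C (⟪c i, d j⟫) * X ^ ((i : ℕ) + (j : ℕ))

lemma innerPoly_eval {H : Type*} [NormedAddCommGroup H] [InnerProductSpace ℝ H]
    (q : ℕ) (c d : Fin (q + 1) → H) (x : ℝ) :
    (innerPoly q c d).eval x
      = ⟪∑ i : Fin (q + 1), x ^ (i : ℕ) • c i, ∑ j : Fin (q + 1), x ^ (j : ℕ) • d j⟫ := by
  simp only [innerPoly, eval_finset_sum, eval_mul, eval_C, eval_pow, eval_X, sum_inner,
    inner_sum, real_inner_smul_left, real_inner_smul_right, pow_add]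
  rw [Finset.sum_comm]
  exact Finset.sum_congr rfl fun i _ => Finset.sum_congr rfl fun j _ => by ring

lemma innerPoly_natDegree {H : Type*} [NormedAddCommGroup H] [InnerProductSpace ℝ H]
    (q : ℕ) (c d : Fin (q + 1) → H) : (innerPoly q c d).natDegree ≤ 2 * q := by
  refine natDegree_sum_le_of_forall_le _ _ fun i _ =>
    natDegree_sum_le_of_forall_le _ _ fun j _ => ?_
  refine (natDegree_C_mul_le _ _).trans ?_
  rw [natDegree_X_pow]
  have := i.isLt; have := j.isLt; omega

noncomputable def innerPolyD {H : Type*} [NormedAddCommGroup H] [InnerProductSpace ℝ H]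
    (q : ℕ) (c d : Fin (q + 1) → H) : Polynomial ℝ :=
  ∑ i : Fin (q + 1), ∑ j : Fin (q + 1),
    C (((i : ℕ) : ℝ) * ⟪c i, d j⟫) * X ^ ((i : ℕ) - 1 + (j : ℕ))

lemma innerPolyD_eval {H : Type*} [NormedAddCommGroup H] [InnerProductSpace ℝ H]
    (q : ℕ) (c d : Fin (q + 1) → H) (x : ℝ) :
    (innerPolyD q c d).eval x
      = ⟪∑ i : Fin (q + 1), (((i : ℕ) : ℝ) * x ^ ((i : ℕ) - 1)) • c i,
          ∑ j : Fin (q + 1), x ^ (j : ℕ) • d j⟫ := by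
  simp only [innerPolyD, eval_finset_sum, eval_mul, eval_C, eval_pow, eval_X, sum_inner,
    inner_sum, real_inner_smul_left, real_inner_smul_right, pow_add]
  rw [Finset.sum_comm]
  exact Finset.sum_congr rfl fun i _ => Finset.sum_congr rfl fun j _ => by ring

lemma innerPolyD_natDegree {H : Type*} [NormedAddCommGroup H] [InnerProductSpace ℝ H]
    (q : ℕ) (c d : Fin (q + 1) → H) : (innerPolyD q c d).natDegree ≤ 2 * q := by
  refine natDegree_sum_le_of_forall_le _ _ fun i _ =>
    natDegree_sum_le_of_forall_le _ _ fun j _ => ?_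
  refine (natDegree_C_mul_le _ _).trans ?_
  rw [natDegree_X_pow]
  have := i.isLt; have := j.isLt; omega

lemma hasDerivAt_polysum {H : Type*} [NormedAddCommGroup H] [InnerProductSpace ℝ H]
    (q : ℕ) (c : Fin (q + 1) → H) (x : ℝ) :
    HasDerivAt (fun y : ℝ => ∑ i : Fin (q + 1), y ^ (i : ℕ) • c i)
      (∑ i : Fin (q + 1), (((i : ℕ) : ℝ) * x ^ ((i : ℕ) - 1)) • c i) x := by
  apply HasDerivAt.fun_sum
  intro i _
  exact (hasDerivAt_pow (i : ℕ) x).smul_const (c i)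

lemma integrableOn_poly_exp (P : Polynomial ℝ) (ρ : ℝ) :
    IntegrableOn (fun x => P.eval x * Real.exp (-2 * ρ * x)) (Set.Ioo (0 : ℝ) 1) := by
  have hc : Continuous fun x : ℝ => P.eval x * Real.exp (-2 * ρ * x) :=
    P.continuous.mul (Real.continuous_exp.comp (by continuity))
  exact (hc.integrableOn_Icc (a := 0) (b := 1)).mono_set Set.Ioo_subset_Icc_self

lemma ftc_poly_exp (Q : Polynomial ℝ) (ρ : ℝ) :
    ∫ x in Set.Ioo (0 : ℝ) 1,
        (Q.derivative.eval x - 2 * ρ * Q.eval x) * Real.exp (-2 * ρ * x)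
      = Q.eval 1 * Real.exp (-2 * ρ) - Q.eval 0 := by
  have hderiv : ∀ x ∈ Set.uIcc (0 : ℝ) 1,
      HasDerivAt (fun y => Q.eval y * Real.exp (-2 * ρ * y))
        ((Q.derivative.eval x - 2 * ρ * Q.eval x) * Real.exp (-2 * ρ * x)) x := by
    intro x _
    have h1 : HasDerivAt (fun y : ℝ => Q.eval y) (Q.derivative.eval x) x := Q.hasDerivAt x
    have h2 : HasDerivAt (fun y : ℝ => Real.exp (-2 * ρ * y))
        ((-2 * ρ) * Real.exp (-2 * ρ * x)) x := by
      have := ((hasDerivAt_id x).const_mul (-2 * ρ)).exp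
      simpa [mul_comm] using this
    have := h1.fun_mul h2
    exact this.congr_deriv (by ring)
  have hcont : Continuous fun x : ℝ =>
      (Q.derivative.eval x - 2 * ρ * Q.eval x) * Real.exp (-2 * ρ * x) := by
    apply Continuous.mul
    · exact Q.derivative.continuous.sub (continuous_const.mul Q.continuous)
    · exact Real.continuous_exp.comp (by continuity)
  have key := intervalIntegral.integral_eq_sub_of_hasDerivAt hderiv
    (hcont.intervalIntegrable 0 1)
  rw [intervalIntegral.integral_of_le (by norm_num : (0:ℝ) ≤ 1),
    MeasureTheory.integral_Ioc_eq_integral_Ioo] at key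
  rw [key]
  norm_num

lemma ftc_split (Q : Polynomial ℝ) (ρ : ℝ) :
    (∫ x in Set.Ioo (0 : ℝ) 1, Q.derivative.eval x * Real.exp (-2 * ρ * x))
      - 2 * ρ * ∫ x in Set.Ioo (0 : ℝ) 1, Q.eval x * Real.exp (-2 * ρ * x)
      = Q.eval 1 * Real.exp (-2 * ρ) - Q.eval 0 := by
  rw [← ftc_poly_exp Q ρ]
  rw [← MeasureTheory.integral_const_mul]
  rw [← MeasureTheory.integral_sub (integrableOn_poly_exp _ ρ)
    ((integrableOn_poly_exp Q ρ).const_mul (2 * ρ))]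
  congr 1; funext x; ring


lemma polysum_zero {H : Type*} [AddCommMonoid H] [Module ℝ H] (q : ℕ) (c : Fin (q + 1) → H) :
    ∑ i : Fin (q + 1), (0 : ℝ) ^ (i : ℕ) • c i = c 0 := by
  rw [Finset.sum_eq_single 0]
  · norm_num
  · intro i _ hne
    have hi : (i : ℕ) ≠ 0 := by intro h0; apply hne; ext; simp [h0]
    rw [zero_pow hi, zero_smul]
  · simp

lemma derivsum_zero {H : Type*} [AddCommMonoid H] [Module ℝ H] (q : ℕ) (hq : 1 ≤ q)
    (c : Fin (q + 1) → H) :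
    ∑ i : Fin (q + 1), (((i : ℕ) : ℝ) * (0 : ℝ) ^ ((i : ℕ) - 1)) • c i
      = c ⟨1, by omega⟩ := by
  rw [Finset.sum_eq_single ⟨1, by omega⟩]
  · norm_num
  · intro i _ hne
    have hv : (i : ℕ) ≠ 1 := by simpa [Fin.ext_iff] using hne
    rcases Nat.eq_zero_or_pos (i : ℕ) with h0 | hpos
    · simp [h0]
    · have hne0 : (i : ℕ) - 1 ≠ 0 := by omega
      rw [zero_pow hne0]; simp
  · simp

lemma coeff_polysum (q : ℕ) (a : Fin (q + 1) → ℝ) (n : Fin (q + 1)) :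
    (∑ j : Fin (q + 1), C (a j) * X ^ (j : ℕ)).coeff (n : ℕ) = a n := by
  rw [finset_sum_coeff, Finset.sum_eq_single n]
  · simp [coeff_C_mul, coeff_X_pow]
  · intro j _ hne
    have hv : (n : ℕ) ≠ (j : ℕ) := by
      intro hh; exact hne (Fin.ext hh.symm)
    simp [coeff_C_mul, coeff_X_pow, hv]
  · simp

lemma natDegree_polysum_le (q : ℕ) (a : Fin (q + 1) → ℝ) :
    (∑ j : Fin (q + 1), C (a j) * X ^ (j : ℕ)).natDegree ≤ q :=
  natDegree_sum_le_of_forall_le _ _ fun j _ => (natDegree_C_mul_le _ _).trans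
    (by rw [natDegree_X_pow]; exact Nat.lt_succ_iff.mp j.isLt)

set_option maxHeartbeats 1000000 in
/-- Lemma `lem:akmak`: for an `H`-valued polynomial `p` of degree `≤ q` and `p̃` the
Lagrange interpolant of `t ↦ p(t)/t` at the Gauß–Radau nodes,
`⟨p', p̃⟩_ρ + ⟨p(0), p̃(0)⟩ ≥ ½(|p(1)|² e^{-2ρ} + ⟨p̃,p̃⟩_ρ) + ρ⟨p,p̃⟩_ρ
  ≥ ½(|p(1)|² e^{-2ρ} + ⟨p,p⟩_ρ) + ρ⟨p,p⟩_ρ`,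
where `⟨a,b⟩_ρ = ∫₀¹ ⟨a(t),b(t)⟩_H e^{-2ρt} dt`. -/
theorem stmt_5 {H : Type*} [NormedAddCommGroup H] [InnerProductSpace ℝ H]
    (ρ : ℝ) (hρ : 0 < ρ) (q : ℕ) (hq : 1 ≤ q)
    (t w : Fin (q + 1) → ℝ) (h : IsGaussRadau01 q ρ t w)
    (p ptilde : ℝ → H) (hp : IsPolyDeg q p) (hpt : IsPolyDeg q ptilde)
    (hinterp : ∀ i, ptilde (t i) = (t i)⁻¹ • p (t i)) :
    ((1 / 2) * (‖p 1‖ ^ 2 * Real.exp (-2 * ρ)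
          + ∫ x in Set.Ioo (0 : ℝ) 1, ⟪p x, p x⟫ * Real.exp (-2 * ρ * x))
        + ρ * ∫ x in Set.Ioo (0 : ℝ) 1, ⟪p x, p x⟫ * Real.exp (-2 * ρ * x)
      ≤ (1 / 2) * (‖p 1‖ ^ 2 * Real.exp (-2 * ρ)
          + ∫ x in Set.Ioo (0 : ℝ) 1, ⟪ptilde x, ptilde x⟫ * Real.exp (-2 * ρ * x))
        + ρ * ∫ x in Set.Ioo (0 : ℝ) 1, ⟪p x, ptilde x⟫ * Real.exp (-2 * ρ * x)) ∧
    ((1 / 2) * (‖p 1‖ ^ 2 * Real.exp (-2 * ρ)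
          + ∫ x in Set.Ioo (0 : ℝ) 1, ⟪ptilde x, ptilde x⟫ * Real.exp (-2 * ρ * x))
        + ρ * ∫ x in Set.Ioo (0 : ℝ) 1, ⟪p x, ptilde x⟫ * Real.exp (-2 * ρ * x)
      ≤ (∫ x in Set.Ioo (0 : ℝ) 1, ⟪deriv p x, ptilde x⟫ * Real.exp (-2 * ρ * x))
        + ⟪p 0, ptilde 0⟫) := by
  classical
  obtain ⟨c, hc⟩ := hp
  obtain ⟨d, hd⟩ := hpt
  obtain ⟨hmem, hmono, hlast, hwpos, hex⟩ := h
  have hti : ∀ i, 0 < t i := fun i => (hmem i).1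
  have hti1 : ∀ i, t i ≤ 1 := fun i => (hmem i).2
  have htne : ∀ i, t i ≠ 0 := fun i => (hti i).ne'
  -- the basic polynomials
  set u : Polynomial ℝ := innerPoly q c c with hu_def
  set ucd : Polynomial ℝ := innerPoly q c d with hucd_def
  set udd : Polynomial ℝ := innerPoly q d d with hudd_def
  set Dcd : Polynomial ℝ := innerPolyD q c d with hDcd_def
  -- derivative of p
  have hderiv_p : ∀ x : ℝ, HasDerivAt p
      (∑ i : Fin (q + 1), (((i : ℕ) : ℝ) * x ^ ((i : ℕ) - 1)) • c i) x := by
    intro x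
    have h1 := hasDerivAt_polysum q c x
    have hfun : (fun y : ℝ => ∑ i : Fin (q + 1), y ^ (i : ℕ) • c i) = p :=
      funext fun y => (hc y).symm
    rwa [hfun] at h1
  have hderiv_p' : ∀ x : ℝ,
      deriv p x = ∑ i : Fin (q + 1), (((i : ℕ) : ℝ) * x ^ ((i : ℕ) - 1)) • c i :=
    fun x => (hderiv_p x).deriv
  -- eval bridges
  have hueval : ∀ x : ℝ, u.eval x = ⟪p x, p x⟫ := by
    intro x; rw [hu_def, innerPoly_eval, ← hc x]
  have hueval' : ∀ x : ℝ, (⟪p x, p x⟫ : ℝ) = u.eval x := fun x => (hueval x).symm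
  have hucd_eval : ∀ x : ℝ, (⟪p x, ptilde x⟫ : ℝ) = ucd.eval x := by
    intro x; rw [hucd_def, innerPoly_eval, ← hc x, ← hd x]
  have hudd_eval : ∀ x : ℝ, (⟪ptilde x, ptilde x⟫ : ℝ) = udd.eval x := by
    intro x; rw [hudd_def, innerPoly_eval, ← hd x]
  have hDcd_eval : ∀ x : ℝ, (⟪deriv p x, ptilde x⟫ : ℝ) = Dcd.eval x := by
    intro x; rw [hDcd_def, innerPolyD_eval, ← hd x, ← hderiv_p' x]
  -- integral conversions
  have hIpp : (∫ x in Set.Ioo (0 : ℝ) 1, ⟪p x, p x⟫ * Real.exp (-2 * ρ * x))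
      = ∑ i, w i * u.eval (t i) := by
    simp only [hueval']; exact hex u (hu_def ▸ innerPoly_natDegree q c c)
  have hIpt : (∫ x in Set.Ioo (0 : ℝ) 1, ⟪p x, ptilde x⟫ * Real.exp (-2 * ρ * x))
      = ∑ i, w i * ucd.eval (t i) := by
    simp only [hucd_eval]; exact hex ucd (hucd_def ▸ innerPoly_natDegree q c d)
  have hItt : (∫ x in Set.Ioo (0 : ℝ) 1, ⟪ptilde x, ptilde x⟫ * Real.exp (-2 * ρ * x))
      = ∑ i, w i * udd.eval (t i) := by
    simp only [hudd_eval]; exact hex udd (hudd_def ▸ innerPoly_natDegree q d d)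
  have hIdt : (∫ x in Set.Ioo (0 : ℝ) 1, ⟪deriv p x, ptilde x⟫ * Real.exp (-2 * ρ * x))
      = ∑ i, w i * Dcd.eval (t i) := by
    simp only [hDcd_eval]; exact hex Dcd (hDcd_def ▸ innerPolyD_natDegree q c d)
  -- node values
  have hUnn : ∀ i, 0 ≤ u.eval (t i) := fun i => by
    rw [hueval]; exact real_inner_self_nonneg
  have hinv1 : ∀ i, 1 ≤ (t i)⁻¹ := by
    intro i
    have h1 : t i * (t i)⁻¹ = 1 := mul_inv_cancel₀ (htne i)
    nlinarith [inv_pos.mpr (hti i), hti1 i, hti i]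
  have hucd_t : ∀ i, ucd.eval (t i) = (t i)⁻¹ * u.eval (t i) := by
    intro i
    rw [← hucd_eval, hinterp i, real_inner_smul_right, hueval]
  have hudd_t : ∀ i, udd.eval (t i) = (t i)⁻¹ * ((t i)⁻¹ * u.eval (t i)) := by
    intro i
    rw [← hudd_eval, hinterp i, real_inner_smul_left, real_inner_smul_right, hueval]
  have hDcd_t : ∀ i, Dcd.eval (t i) = (t i)⁻¹ * ⟪deriv p (t i), p (t i)⟫ := by
    intro i
    rw [← hDcd_eval, hinterp i, real_inner_smul_right]
  rw [hIpp, hIpt, hItt, hIdt]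
  constructor
  · -- first inequality
    have h1 : ∑ i, w i * u.eval (t i) ≤ ∑ i, w i * ucd.eval (t i) := by
      refine Finset.sum_le_sum fun i _ => ?_
      rw [hucd_t i]
      have h2 := mul_nonneg (mul_nonneg (hwpos i).le (hUnn i)) (sub_nonneg.mpr (hinv1 i))
      nlinarith
    have h2 : ∑ i, w i * u.eval (t i) ≤ ∑ i, w i * udd.eval (t i) := by
      refine Finset.sum_le_sum fun i _ => ?_
      rw [hudd_t i]
      have h3 : 1 ≤ (t i)⁻¹ * (t i)⁻¹ := by nlinarith [hinv1 i]
      have h4 := mul_nonneg (mul_nonneg (hwpos i).le (hUnn i)) (sub_nonneg.mpr h3)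
      nlinarith
    have h3 := mul_le_mul_of_nonneg_left h1 hρ.le
    linarith
  · -- second inequality
    -- decomposition of u
    set r : Polynomial ℝ := u.divX with hr_def
    set u0 : ℝ := u.eval 0 with hu0_def
    have hu_dec : r * Polynomial.X + Polynomial.C u0 = u := by
      rw [hr_def, hu0_def, ← coeff_zero_eq_eval_zero]; exact u.divX_mul_X_add
    have hu_eval_dec : ∀ x : ℝ, u.eval x = x * r.eval x + u0 := by
      intro x; conv_lhs => rw [← hu_dec]
      simp only [eval_add, eval_mul, eval_X, eval_C]; ring
    have hu_der : u.derivative = r.derivative * Polynomial.X + r := by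
      conv_lhs => rw [← hu_dec]
      rw [derivative_add, derivative_mul, derivative_X, derivative_C, mul_one, add_zero]
    have hu_der_eval : ∀ x : ℝ, u.derivative.eval x = r.derivative.eval x * x + r.eval x := by
      intro x; rw [hu_der]; simp [eval_add, eval_mul, eval_X]
    -- analytic bridge for the derivative of ‖p‖²
    have hud2 : ∀ x : ℝ, u.derivative.eval x = 2 * ⟪deriv p x, p x⟫ := by
      intro x
      have hx := hderiv_p x
      have h2 := HasDerivAt.inner ℝ hx hx
      have h3 := h2.deriv
      have h4 : (fun y => (⟪p y, p y⟫ : ℝ)) = fun y => u.eval y :=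
        funext fun y => (hueval y).symm
      rw [h4] at h3
      rw [Polynomial.deriv] at h3
      rw [h3, ← hx.deriv, real_inner_comm (p x)]
      ring
    -- degree bookkeeping for r
    have hudeg : u.natDegree ≤ 2 * q := hu_def ▸ innerPoly_natDegree q c c
    have hrdeg : r.natDegree ≤ 2 * q := (natDegree_divX_le (p := u)).trans hudeg
    -- quadrature + FTC for r
    have hIr := hex r hrdeg
    have hIrd := hex r.derivative ((natDegree_derivative_le r).trans
      ((Nat.sub_le _ _).trans hrdeg))
    have hfR : (∑ i, w i * r.derivative.eval (t i)) - 2 * ρ * ∑ i, w i * r.eval (t i)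
        = r.eval 1 * Real.exp (-2 * ρ) - r.eval 0 := by
      have hftc := ftc_split r ρ
      rw [hIrd, hIr] at hftc
      exact hftc
    -- the node polynomial ω
    set ω : Polynomial ℝ := ∏ i : Fin (q + 1), (Polynomial.X - Polynomial.C (t i))
      with hω_def
    have hωmonic : ω.Monic :=
      monic_prod_of_monic _ _ fun i _ => monic_X_sub_C (t i)
    have hωdeg : ω.natDegree = q + 1 := by
      rw [hω_def, natDegree_prod_of_monic _ _ fun i _ => monic_X_sub_C (t i)]
      simp [natDegree_X_sub_C]
    have hωt : ∀ i, ω.eval (t i) = 0 := by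
      intro i
      rw [hω_def, eval_prod]
      exact Finset.prod_eq_zero (Finset.mem_univ i) (by simp)
    have hω1 : ω.eval 1 = 0 := by
      have h5 := hωt (Fin.last q); rwa [hlast] at h5
    set ω0 : ℝ := ω.eval 0 with hω0_def
    have hω0ne : ω0 ≠ 0 := by
      rw [hω0_def, hω_def, eval_prod]
      refine Finset.prod_ne_zero_iff.mpr fun i _ => ?_
      simp only [eval_sub, eval_X, eval_C, zero_sub, neg_ne_zero]
      exact htne i
    set ω1 : ℝ := ω.coeff 1 with hω1_def
    have hωtop : ω.coeff (q + 1) = 1 := by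
      have h5 := hωmonic.coeff_natDegree
      rwa [hωdeg] at h5
    -- the interpolant L of 1/t
    set L : Polynomial ℝ := (Polynomial.C ω0 - ω).divX * Polynomial.C ω0⁻¹ with hL_def
    have hXL : Polynomial.X * L = (Polynomial.C ω0 - ω) * Polynomial.C ω0⁻¹ := by
      have h0 : (Polynomial.C ω0 - ω).coeff 0 = 0 := by
        simp [coeff_sub, coeff_C_zero, coeff_zero_eq_eval_zero, hω0_def]
      have h5 := (Polynomial.C ω0 - ω).divX_mul_X_add
      rw [h0, map_zero, add_zero] at h5
      calc Polynomial.X * L = (Polynomial.C ω0 - ω).divX * Polynomial.X * Polynomial.C ω0⁻¹ := by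
            rw [hL_def]; ring
        _ = (Polynomial.C ω0 - ω) * Polynomial.C ω0⁻¹ := by rw [h5]
    have hXL_eval : ∀ x : ℝ, x * L.eval x = (ω0 - ω.eval x) * ω0⁻¹ := by
      intro x
      have h5 := congrArg (Polynomial.eval x) hXL
      simpa using h5
    have hLt : ∀ i, L.eval (t i) = (t i)⁻¹ := by
      intro i
      have h5 : t i * L.eval (t i) = 1 := by
        rw [hXL_eval, hωt i, sub_zero, mul_inv_cancel₀ hω0ne]
      exact eq_inv_of_mul_eq_one_left (by rw [mul_comm]; exact h5)
    have hL1 : L.eval 1 = 1 := by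
      have h5 := hXL_eval 1
      rw [hω1, sub_zero, one_mul, mul_inv_cancel₀ hω0ne] at h5
      exact h5
    have hL0 : L.eval 0 = -ω1 * ω0⁻¹ := by
      rw [hL_def, eval_mul, eval_C, ← coeff_zero_eq_eval_zero, coeff_divX, coeff_sub,
        coeff_C]
      simp [hω1_def]
    have hLdeg : L.natDegree ≤ q := by
      have h5 : (Polynomial.C ω0 - ω).divX.natDegree ≤ q := by
        rw [natDegree_divX_eq_natDegree_tsub_one]
        have h6 := natDegree_sub_le (Polynomial.C ω0) ω
        rw [natDegree_C, hωdeg] at h6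
        omega
      calc L.natDegree ≤ (Polynomial.C ω0 - ω).divX.natDegree + (Polynomial.C ω0⁻¹).natDegree :=
            hL_def ▸ natDegree_mul_le
        _ ≤ q := by rw [natDegree_C]; omega
    have hLcoeffq : L.coeff q = -ω0⁻¹ := by
      rw [hL_def, coeff_mul_C, coeff_divX, coeff_sub, coeff_C]
      simp [hωtop]
    have hLder : L + Polynomial.X * L.derivative = -ω.derivative * Polynomial.C ω0⁻¹ := by
      have h5 := congrArg Polynomial.derivative hXL
      simp only [derivative_mul, derivative_X, derivative_C, derivative_sub, one_mul,
        mul_zero, add_zero, zero_sub] at h5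
      linear_combination h5
    have hLder_t : ∀ i, L.derivative.eval (t i)
        = -(ω.derivative.eval (t i)) * ω0⁻¹ * (t i)⁻¹ - (t i)⁻¹ * (t i)⁻¹ := by
      intro i
      have h5 := congrArg (Polynomial.eval (t i)) hLder
      simp only [eval_add, eval_mul, eval_X, eval_neg, eval_C] at h5
      rw [hLt i] at h5
      have h6 : t i * L.derivative.eval (t i) = -(ω.derivative.eval (t i)) * ω0⁻¹ - (t i)⁻¹ := by
        linarith [h5]
      have hne := htne i
      calc L.derivative.eval (t i) = (t i)⁻¹ * (t i * L.derivative.eval (t i)) := by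
            field_simp
        _ = (t i)⁻¹ * (-(ω.derivative.eval (t i)) * ω0⁻¹ - (t i)⁻¹) := by rw [h6]
        _ = -(ω.derivative.eval (t i)) * ω0⁻¹ * (t i)⁻¹ - (t i)⁻¹ * (t i)⁻¹ := by ring
    have hLder_deg : L.derivative.natDegree ≤ q - 1 :=
      (natDegree_derivative_le L).trans (Nat.sub_le_sub_right hLdeg 1)
    -- quadrature values involving L
    have hIL : (∫ x in Set.Ioo (0 : ℝ) 1, L.eval x * Real.exp (-2 * ρ * x))
        = ∑ i, w i * (t i)⁻¹ := by
      rw [hex L (hLdeg.trans (by omega))]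
      exact Finset.sum_congr rfl fun i _ => by rw [hLt i]
    have hILd : (∫ x in Set.Ioo (0 : ℝ) 1, L.derivative.eval x * Real.exp (-2 * ρ * x))
        = ∑ i, w i * L.derivative.eval (t i) :=
      hex L.derivative (hLder_deg.trans (by omega))
    have e2 : (∑ i, w i * L.derivative.eval (t i)) - 2 * ρ * ∑ i, w i * (t i)⁻¹
        = Real.exp (-2 * ρ) - (-ω1 * ω0⁻¹) := by
      have hftc := ftc_split L ρ
      rw [hILd, hIL, hL1, one_mul, hL0] at hftc
      exact hftc
    -- the J integral
    set J : ℝ := ∫ x in Set.Ioo (0 : ℝ) 1, (ω * L).eval x * Real.exp (-2 * ρ * x) with hJ_def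
    have hsplit : (∫ x in Set.Ioo (0 : ℝ) 1,
          (ω * L).derivative.eval x * Real.exp (-2 * ρ * x))
        = (∫ x in Set.Ioo (0 : ℝ) 1, (ω.derivative * L).eval x * Real.exp (-2 * ρ * x))
          + ∫ x in Set.Ioo (0 : ℝ) 1, (ω * L.derivative).eval x * Real.exp (-2 * ρ * x) := by
      rw [derivative_mul]
      simp only [eval_add, add_mul]
      exact integral_add (integrableOn_poly_exp _ _) (integrableOn_poly_exp _ _)
    have hB : (∫ x in Set.Ioo (0 : ℝ) 1, (ω.derivative * L).eval x * Real.exp (-2 * ρ * x))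
        = ∑ i, w i * (ω.derivative.eval (t i) * (t i)⁻¹) := by
      rw [hex (ω.derivative * L) (natDegree_mul_le.trans (by
        have h5 := natDegree_derivative_le ω
        rw [hωdeg] at h5
        omega))]
      refine Finset.sum_congr rfl fun i _ => ?_
      rw [eval_mul, hLt i]
    have h0' : (∫ x in Set.Ioo (0 : ℝ) 1,
          (ω * L.derivative).eval x * Real.exp (-2 * ρ * x)) = 0 := by
      rw [hex (ω * L.derivative) (natDegree_mul_le.trans (by rw [hωdeg]; omega))]
      refine Finset.sum_eq_zero fun i _ => by rw [eval_mul, hωt i, zero_mul, mul_zero]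
    have e3 : (∑ i, w i * (ω.derivative.eval (t i) * (t i)⁻¹)) = ω1 + 2 * ρ * J := by
      have hftc := ftc_split (ω * L) ρ
      rw [hsplit, hB, h0'] at hftc
      have hev1 : (ω * L).eval 1 = 0 := by rw [eval_mul, hω1, zero_mul]
      have hev0 : (ω * L).eval 0 = -ω1 := by
        rw [eval_mul, hL0, ← hω0_def]
        field_simp
      rw [hev1, hev0, zero_mul, zero_sub, neg_neg, ← hJ_def] at hftc
      linarith [hftc]
    -- the polynomial σ
    set σ : Polynomial ℝ := ω /ₘ (Polynomial.X - Polynomial.C 1) with hσ_def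
    have hσ : (Polynomial.X - Polynomial.C 1) * σ = ω :=
      mul_divByMonic_eq_iff_isRoot.mpr hω1
    have hσne : σ ≠ 0 := by
      intro h0
      rw [h0, mul_zero] at hσ
      exact hωmonic.ne_zero hσ.symm
    have hσdeg : σ.natDegree = q := by
      have h5 := natDegree_mul (X_sub_C_ne_zero (1 : ℝ)) hσne
      rw [hσ, hωdeg, natDegree_X_sub_C] at h5
      omega
    have hσmonic : σ.Monic := (monic_X_sub_C (1 : ℝ)).of_mul_monic_left (hσ.symm ▸ hωmonic)
    have hσcoeff : σ.coeff q = 1 := by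
      have h5 := hσmonic.coeff_natDegree
      rwa [hσdeg] at h5
    -- the correction polynomial s'
    set s' : Polynomial ℝ := L + Polynomial.C ω0⁻¹ * σ with hs'_def
    have hs'deg : s'.natDegree ≤ q - 1 := by
      have hdegle : s'.natDegree ≤ q := by
        refine (natDegree_add_le _ _).trans (max_le hLdeg ?_)
        exact (natDegree_C_mul_le _ _).trans hσdeg.le
      have hcq : s'.coeff q = 0 := by
        rw [hs'_def, coeff_add, coeff_C_mul, hσcoeff, hLcoeffq]
        ring
      rw [natDegree_le_iff_coeff_eq_zero]
      intro N hN
      rcases eq_or_lt_of_le (show q ≤ N by omega) with hEq | hLt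
      · rw [← hEq]; exact hcq
      · exact coeff_eq_zero_of_natDegree_lt (lt_of_le_of_lt hdegle hLt)
    have hωL : ω * L = ω * s' - Polynomial.C ω0⁻¹ * (ω * σ) := by
      rw [hs'_def]; ring
    have hIωs : (∫ x in Set.Ioo (0 : ℝ) 1, (ω * s').eval x * Real.exp (-2 * ρ * x)) = 0 := by
      rw [hex (ω * s') (natDegree_mul_le.trans (by rw [hωdeg]; omega))]
      refine Finset.sum_eq_zero fun i _ => by rw [eval_mul, hωt i, zero_mul, mul_zero]
    set N : ℝ := ∫ x in Set.Ioo (0 : ℝ) 1, (ω * σ).eval x * Real.exp (-2 * ρ * x) with hN_def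
    have e4 : J = -ω0⁻¹ * N := by
      have heq : ∀ x : ℝ, (ω * L).eval x * Real.exp (-2 * ρ * x)
          = (ω * s').eval x * Real.exp (-2 * ρ * x)
            - ω0⁻¹ * ((ω * σ).eval x * Real.exp (-2 * ρ * x)) := by
        intro x
        rw [hωL]
        simp only [eval_sub, eval_mul, eval_C]
        ring
      rw [hJ_def]
      calc (∫ x in Set.Ioo (0 : ℝ) 1, (ω * L).eval x * Real.exp (-2 * ρ * x))
          = ∫ x in Set.Ioo (0 : ℝ) 1, ((ω * s').eval x * Real.exp (-2 * ρ * x)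
              - ω0⁻¹ * ((ω * σ).eval x * Real.exp (-2 * ρ * x))) := by
            simp only [heq]
        _ = (∫ x in Set.Ioo (0 : ℝ) 1, (ω * s').eval x * Real.exp (-2 * ρ * x))
              - ∫ x in Set.Ioo (0 : ℝ) 1, ω0⁻¹ * ((ω * σ).eval x * Real.exp (-2 * ρ * x)) :=
            integral_sub (integrableOn_poly_exp _ _) ((integrableOn_poly_exp _ _).const_mul _)
        _ = -ω0⁻¹ * N := by
            rw [hIωs, MeasureTheory.integral_const_mul, ← hN_def]
            ring
    have e5 : N ≤ 0 := by
      rw [hN_def]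
      refine setIntegral_nonpos measurableSet_Ioo fun x hx => ?_
      have hx1 : x < 1 := hx.2
      have heq : (ω * σ).eval x = (x - 1) * (σ.eval x * σ.eval x) := by
        rw [← hσ]
        simp only [eval_mul, eval_sub, eval_X, eval_C]
        ring
      rw [heq]
      have h5 : (x - 1) * (σ.eval x * σ.eval x) ≤ 0 :=
        mul_nonpos_of_nonpos_of_nonneg (by linarith) (mul_self_nonneg _)
      exact mul_nonpos_of_nonpos_of_nonneg h5 (Real.exp_pos _).le
    -- combine to the key quadrature inequality constant
    have e1 : (∑ i, w i * ((t i)⁻¹ * (t i)⁻¹)) + (∑ i, w i * L.derivative.eval (t i))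
        = -ω0⁻¹ * ∑ i, w i * (ω.derivative.eval (t i) * (t i)⁻¹) := by
      rw [← Finset.sum_add_distrib, Finset.mul_sum]
      refine Finset.sum_congr rfl fun i _ => ?_
      rw [hLder_t i]
      ring
    have hhK : (1 / 2) * Real.exp (-2 * ρ) + (1 / 2) * (∑ i, w i * ((t i)⁻¹ * (t i)⁻¹))
        + ρ * (∑ i, w i * (t i)⁻¹) + ω1 * ω0⁻¹
        = ρ * (ω0⁻¹ * ω0⁻¹) * N := by
      linear_combination (1 / 2) * e1 - (1 / 2) * e2 - (ω0⁻¹ / 2) * e3 - ρ * ω0⁻¹ * e4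
    -- values of p, ptilde, deriv p at 0
    have hp0c : p 0 = c 0 := by rw [hc 0]; exact polysum_zero q c
    have hpt0 : ptilde 0 = d 0 := by rw [hd 0]; exact polysum_zero q d
    have hderiv0 : deriv p 0 = c ⟨1, by omega⟩ := by
      rw [hderiv_p' 0]; exact derivsum_zero q hq c
    -- the interpolation identity at 0
    have hFh : ∀ v : H,
        Polynomial.X * (∑ j : Fin (q + 1), Polynomial.C (⟪v, d j⟫) * Polynomial.X ^ (j : ℕ))
          - (∑ j : Fin (q + 1), Polynomial.C (⟪v, c j⟫) * Polynomial.X ^ (j : ℕ))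
          - Polynomial.C (⟪v, d (Fin.last q)⟫) * ω = 0 := by
      intro v
      set Pd : Polynomial ℝ := ∑ j : Fin (q + 1), Polynomial.C (⟪v, d j⟫) * Polynomial.X ^ (j : ℕ)
        with hPd_def
      set Pc : Polynomial ℝ := ∑ j : Fin (q + 1), Polynomial.C (⟪v, c j⟫) * Polynomial.X ^ (j : ℕ)
        with hPc_def
      set F : Polynomial ℝ := Polynomial.X * Pd - Pc - Polynomial.C (⟪v, d (Fin.last q)⟫) * ω
        with hF_def
      have hPd_deg : Pd.natDegree ≤ q := natDegree_polysum_le q _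
      have hPc_deg : Pc.natDegree ≤ q := natDegree_polysum_le q _
      have hFdeg1 : F.natDegree ≤ q + 1 := by
        refine (natDegree_sub_le _ _).trans (max_le ((natDegree_sub_le _ _).trans (max_le ?_ ?_)) ?_)
        · exact natDegree_mul_le.trans (by rw [natDegree_X]; omega)
        · omega
        · exact (natDegree_C_mul_le _ _).trans (by rw [hωdeg])
      have hcoeffq1 : F.coeff (q + 1) = 0 := by
        rw [hF_def, coeff_sub, coeff_sub, coeff_X_mul, coeff_C_mul]
        have hd1 : Pd.coeff q = ⟪v, d (Fin.last q)⟫ := by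
          have h5 := coeff_polysum q (fun j => (⟪v, d j⟫ : ℝ)) (Fin.last q)
          rwa [Fin.val_last] at h5
        have hc1 : Pc.coeff (q + 1) = 0 :=
          coeff_eq_zero_of_natDegree_lt (lt_of_le_of_lt hPc_deg (by omega))
        rw [hd1, hc1, hωtop]
        ring
      have hFdeg : F.natDegree ≤ q := by
        rw [natDegree_le_iff_coeff_eq_zero]
        intro M hM
        rcases eq_or_lt_of_le (show q + 1 ≤ M by omega) with hEq | hLt
        · rw [← hEq]; exact hcoeffq1
        · exact coeff_eq_zero_of_natDegree_lt (lt_of_le_of_lt hFdeg1 hLt)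
      have heval : ∀ i, F.eval (t i) = 0 := by
        intro i
        have hPde : Pd.eval (t i) = ⟪v, ptilde (t i)⟫ := by
          rw [hPd_def, eval_finset_sum, hd]
          simp only [eval_mul, eval_C, eval_pow, eval_X, inner_sum, real_inner_smul_right]
          exact Finset.sum_congr rfl fun j _ => by ring
        have hPce : Pc.eval (t i) = ⟪v, p (t i)⟫ := by
          rw [hPc_def, eval_finset_sum, hc]
          simp only [eval_mul, eval_C, eval_pow, eval_X, inner_sum, real_inner_smul_right]
          exact Finset.sum_congr rfl fun j _ => by ring
        rw [hF_def]
        simp only [eval_sub, eval_mul, eval_X, eval_C]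
        rw [hPde, hPce, hωt i, mul_zero, hinterp i, real_inner_smul_right, sub_zero]
        have hinv : (t i)⁻¹ * t i = 1 := inv_mul_cancel₀ (htne i)
        linear_combination (inner ℝ v (p (t i)) : ℝ) * hinv
      refine eq_zero_of_natDegree_lt_card_of_eval_eq_zero F hmono.injective heval ?_
      rw [Fintype.card_fin]
      omega
    have hK1 : ∀ v : H, (⟪v, c 0⟫ : ℝ) + ⟪v, d (Fin.last q)⟫ * ω0 = 0 := by
      intro v
      have h5 := congrArg (fun P : Polynomial ℝ => P.coeff 0) (hFh v)
      simp only [coeff_sub, coeff_zero, mul_coeff_zero, coeff_X_zero, zero_mul,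
        coeff_C_mul, coeff_C_zero] at h5
      have hc0 : (∑ j : Fin (q + 1), Polynomial.C (⟪v, c j⟫) * Polynomial.X ^ (j : ℕ)).coeff 0
          = ⟪v, c 0⟫ := by
        have h6 := coeff_polysum q (fun j => (⟪v, c j⟫ : ℝ)) 0
        simpa using h6
      have hω0' : ω.coeff 0 = ω0 := by
        rw [coeff_zero_eq_eval_zero]
      rw [hc0, hω0'] at h5
      linarith [h5]
    have hK2 : ∀ v : H, (⟪v, d 0⟫ : ℝ) - ⟪v, c ⟨1, by omega⟩⟫
        - ⟪v, d (Fin.last q)⟫ * ω1 = 0 := by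
      intro v
      have h5 := congrArg (fun P : Polynomial ℝ => P.coeff 1) (hFh v)
      simp only [coeff_sub, coeff_zero, coeff_C_mul] at h5
      have hXc : (Polynomial.X * (∑ j : Fin (q + 1),
          Polynomial.C (⟪v, d j⟫) * Polynomial.X ^ (j : ℕ))).coeff 1
          = ⟪v, d 0⟫ := by
        have h6 := coeff_polysum q (fun j => (⟪v, d j⟫ : ℝ)) 0
        exact (coeff_X_mul
          (∑ j : Fin (q + 1), Polynomial.C ((⟪v, d j⟫ : ℝ)) * Polynomial.X ^ (j : ℕ)) 0).trans
          (by simpa using h6)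
      have hc1 : (∑ j : Fin (q + 1), Polynomial.C (⟪v, c j⟫) * Polynomial.X ^ (j : ℕ)).coeff 1
          = ⟪v, c ⟨1, by omega⟩⟫ := by
        have h6 := coeff_polysum q (fun j => (⟪v, c j⟫ : ℝ)) ⟨1, by omega⟩
        simpa using h6
      rw [hXc, hc1] at h5
      rw [← hω1_def] at h5
      linarith [h5]
    -- value of the inner product at 0
    have hu0inner : u0 = ⟪p 0, p 0⟫ := by rw [hu0_def, hueval 0]
    have hu0nn : 0 ≤ u0 := by rw [hu0inner]; exact real_inner_self_nonneg
    have hr0 : r.eval 0 = 2 * ⟪deriv p 0, p 0⟫ := by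
      have h5 := hud2 0
      have h6 := hu_der_eval 0
      rw [mul_zero, zero_add] at h6
      linarith [h5, h6]
    have hgP : (⟪p 0, ptilde 0⟫ : ℝ) = (1 / 2) * r.eval 0 - ω1 * ω0⁻¹ * u0 := by
      have k1 := hK1 (p 0)
      have k2 := hK2 (p 0)
      have hcc : (⟪p 0, c 0⟫ : ℝ) = u0 := by rw [← hp0c, hu0inner]
      have hc1' : (⟪p 0, c ⟨1, by omega⟩⟫ : ℝ) = (1 / 2) * r.eval 0 := by
        rw [← hderiv0, real_inner_comm, hr0]
        ring
      have hdl : (⟪p 0, d (Fin.last q)⟫ : ℝ) = -u0 * ω0⁻¹ := by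
        rw [hcc] at k1
        field_simp
        linarith [k1]
      rw [hpt0]
      linear_combination k2 + hc1' + ω1 * hdl
    -- per-node expansions of the three sums
    have hcS2 : (∑ i, w i * udd.eval (t i))
        = (∑ i, w i * ((t i)⁻¹ * r.eval (t i))) + u0 * ∑ i, w i * ((t i)⁻¹ * (t i)⁻¹) := by
      rw [Finset.mul_sum, ← Finset.sum_add_distrib]
      refine Finset.sum_congr rfl fun i _ => ?_
      rw [hudd_t i, hu_eval_dec (t i)]
      have hinv : (t i)⁻¹ * t i = 1 := inv_mul_cancel₀ (htne i)
      linear_combination (w i * (t i)⁻¹ * r.eval (t i)) * hinv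
    have hdS1 : (∑ i, w i * ucd.eval (t i))
        = (∑ i, w i * r.eval (t i)) + u0 * ∑ i, w i * (t i)⁻¹ := by
      rw [Finset.mul_sum, ← Finset.sum_add_distrib]
      refine Finset.sum_congr rfl fun i _ => ?_
      rw [hucd_t i, hu_eval_dec (t i)]
      have hinv : (t i)⁻¹ * t i = 1 := inv_mul_cancel₀ (htne i)
      linear_combination (w i * r.eval (t i)) * hinv
    have heSD : 2 * (∑ i, w i * Dcd.eval (t i))
        = (∑ i, w i * ((t i)⁻¹ * r.eval (t i)))
            + ∑ i, w i * r.derivative.eval (t i) := by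
      rw [Finset.mul_sum, ← Finset.sum_add_distrib]
      refine Finset.sum_congr rfl fun i _ => ?_
      rw [hDcd_t i]
      have h5 := hud2 (t i)
      have h6 := hu_der_eval (t i)
      have hDi : (⟪deriv p (t i), p (t i)⟫ : ℝ)
          = (1 / 2) * (r.derivative.eval (t i) * t i + r.eval (t i)) := by linarith
      rw [hDi]
      have hinv : (t i)⁻¹ * t i = 1 := inv_mul_cancel₀ (htne i)
      linear_combination (w i * r.derivative.eval (t i)) * hinv
    -- final assembly
    have hp1 : ‖p 1‖ ^ 2 = u.eval 1 := by
      rw [hueval 1, real_inner_self_eq_norm_sq]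
    have hu1 : u.eval 1 = r.eval 1 + u0 := by
      have h5 := hu_eval_dec 1
      linarith
    have key : (1 / 2) * (‖p 1‖ ^ 2 * Real.exp (-2 * ρ) + ∑ i, w i * udd.eval (t i))
          + ρ * ∑ i, w i * ucd.eval (t i)
          - ((∑ i, w i * Dcd.eval (t i)) + ⟪p 0, ptilde 0⟫)
        = u0 * (ρ * (ω0⁻¹ * ω0⁻¹) * N) := by
      linear_combination (Real.exp (-2 * ρ) / 2) * hp1 + (Real.exp (-2 * ρ) / 2) * hu1
        + (1 / 2) * hcS2 + ρ * hdS1 - (1 / 2) * heSD - (1 / 2) * hfR - hgP + u0 * hhK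
    have hfin : u0 * (ρ * (ω0⁻¹ * ω0⁻¹) * N) ≤ 0 := by
      have h5 : ρ * (ω0⁻¹ * ω0⁻¹) * N ≤ 0 :=
        mul_nonpos_of_nonneg_of_nonpos (mul_nonneg hρ.le (mul_self_nonneg ω0⁻¹)) e5
      exact mul_nonpos_of_nonneg_of_nonpos hu0nn h5
    linarith [key, hfin]
end

section
/- Let q ∈ ℕ. The map w ↦ (ω(w), r(w)) that assigns to each w ∈ W its (unique) right-sided w-Gauß–Radau quadrature of order q is continuous from (W, ‖·‖_{L¹(−1,1)}) to ℝ^{q+1} × (−1,1]^{q+1}; that is, if w_n → w in L¹(−1,1) with all w_n, w ∈ W, then ω(w_n) → ω(w) in ℝ^{q+1} and r(w_n) → r(w) in ℝ^{q+1}. -/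
open MeasureTheory Real Filter

/-- The class `W` of weighting functions: `w ∈ L¹(-1,1)` with `w > 0` almost everywhere. -/
def IsWeight (w : ℝ → ℝ) : Prop :=
  IntegrableOn w (Set.Ioo (-1 : ℝ) 1) ∧
    ∀ᵐ x ∂(volume.restrict (Set.Ioo (-1 : ℝ) 1)), 0 < w x

/-- A (right-sided) `w`-Gauß–Radau quadrature of order `q`. -/
def IsGaussRadauQuad (q : ℕ) (w : ℝ → ℝ) (ω r : Fin (q + 1) → ℝ) : Prop :=
  (∀ j, r j ∈ Set.Icc (-1 : ℝ) 1) ∧ Monotone r ∧ r (Fin.last q) = 1 ∧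
    ∀ p : Polynomial ℝ, p.natDegree ≤ 2 * q →
      ∫ x in Set.Ioo (-1 : ℝ) 1, p.eval x * w x = ∑ j, ω j * p.eval (r j)


open Polynomial

lemma integrableOn_poly_mul (p : Polynomial ℝ) {w : ℝ → ℝ}
    (hw : IntegrableOn w (Set.Ioo (-1 : ℝ) 1)) :
    IntegrableOn (fun x => p.eval x * w x) (Set.Ioo (-1 : ℝ) 1) := by
  obtain ⟨C, hC⟩ : ∃ C, ∀ x ∈ Set.Icc (-1:ℝ) 1, |p.eval x| ≤ C := by
    obtain ⟨C, hC⟩ := (isCompact_Icc (a := (-1:ℝ)) (b := 1)).exists_bound_of_continuousOn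
      (p.continuous.norm.continuousOn)
    exact ⟨C, fun x hx => by simpa using hC x hx⟩
  refine Integrable.mono' (hw.abs.const_mul C)
    ((p.continuous.aestronglyMeasurable).mul hw.aestronglyMeasurable) ?_
  filter_upwards [ae_restrict_mem measurableSet_Ioo] with x hx
  have : |p.eval x| ≤ C := hC x ⟨le_of_lt hx.1, le_of_lt hx.2⟩
  calc ‖p.eval x * w x‖ = |p.eval x| * |w x| := by rw [norm_mul]; rfl
    _ ≤ C * |w x| := by
        exact mul_le_mul_of_nonneg_right this (abs_nonneg _)

lemma integral_poly_pos {w : ℝ → ℝ} (hw : IsWeight w) {p : Polynomial ℝ} (hp : p ≠ 0)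
    (hnn : ∀ x ∈ Set.Ioo (-1:ℝ) 1, 0 ≤ p.eval x) :
    0 < ∫ x in Set.Ioo (-1:ℝ) 1, p.eval x * w x := by
  have hroots : (volume.restrict (Set.Ioo (-1:ℝ) 1)) {x | p.eval x = 0} = 0 := by
    have hfin : {x : ℝ | p.eval x = 0}.Finite := Polynomial.finite_setOf_isRoot hp
    exact le_antisymm (le_trans (Measure.restrict_le_self _)
      (by simpa using hfin.measure_zero volume)) zero_le
  have hpos : ∀ᵐ x ∂(volume.restrict (Set.Ioo (-1:ℝ) 1)), 0 < p.eval x * w x := by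
    have h1 : ∀ᵐ x ∂(volume.restrict (Set.Ioo (-1:ℝ) 1)), p.eval x ≠ 0 :=
      (ae_iff).2 (by simpa using hroots)
    filter_upwards [hw.2, h1, ae_restrict_mem measurableSet_Ioo] with x h2 h3 hx
    exact mul_pos (lt_of_le_of_ne (hnn x hx) (Ne.symm h3)) h2
  have hint := integrableOn_poly_mul p hw.1
  rw [integral_pos_iff_support_of_nonneg_ae (hpos.mono fun x hx => le_of_lt hx) hint]
  have : ∀ᵐ x ∂(volume.restrict (Set.Ioo (-1:ℝ) 1)),
      x ∈ Function.support (fun x => p.eval x * w x) :=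
    hpos.mono fun x hx => ne_of_gt hx
  calc (0:ENNReal) < volume (Set.Ioo (-1:ℝ) 1) := by simp
    _ = (volume.restrict (Set.Ioo (-1:ℝ) 1)) Set.univ := by
        rw [Measure.restrict_apply_univ]
    _ ≤ _ := le_of_eq (measure_congr (Filter.eventuallyEq_univ.2 this)).symm

lemma sqprod_monic {ι : Type*} (S : Finset ι) (f : ι → ℝ) :
    (∏ i ∈ S, ((X - C (f i)) ^ 2)).Monic :=
  monic_prod_of_monic _ _ fun i _ => (monic_X_sub_C (f i)).pow 2

lemma sqprod_natDegree {ι : Type*} (S : Finset ι) (f : ι → ℝ) :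
    (∏ i ∈ S, ((X - C (f i)) ^ 2)).natDegree = 2 * S.card := by
  rw [Polynomial.natDegree_prod _ _ (fun i _ => pow_ne_zero _ (X_sub_C_ne_zero (f i)))]
  simp [natDegree_pow, natDegree_X_sub_C, mul_comm, Finset.sum_const]

lemma sqprod_eval {ι : Type*} (S : Finset ι) (f : ι → ℝ) (x : ℝ) :
    (∏ i ∈ S, ((X - C (f i)) ^ 2)).eval x = ∏ i ∈ S, (x - f i) ^ 2 := by
  simp [eval_prod]

lemma sqprod_eval_nonneg {ι : Type*} (S : Finset ι) (f : ι → ℝ) (x : ℝ) :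
    0 ≤ (∏ i ∈ S, ((X - C (f i)) ^ 2)).eval x := by
  rw [sqprod_eval]; exact Finset.prod_nonneg fun i _ => sq_nonneg _

lemma quad_strictMono {q : ℕ} {w : ℝ → ℝ} {ω r : Fin (q + 1) → ℝ}
    (hw : IsWeight w) (h : IsGaussRadauQuad q w ω r) : StrictMono r := by
  refine h.2.1.strictMono_of_injective ?_
  by_contra hinj
  set S := Finset.univ.image r with hS
  have hcard : S.card ≤ q := by
    have hne : S.card ≠ q + 1 := by
      intro hc
      apply hinj
      have : Set.InjOn r (Finset.univ : Finset (Fin (q+1))) := by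
        rw [← Finset.card_image_iff (f := r)]
        simpa using hc
      exact fun a b hab => this (by simp) (by simp) hab
    have hle : S.card ≤ q + 1 := by
      have := Finset.card_image_le (s := (Finset.univ : Finset (Fin (q+1)))) (f := r)
      simpa [hS] using this
    omega
  set p := ∏ s ∈ S, ((X - C s) ^ 2) with hp
  have hdeg : p.natDegree ≤ 2 * q := by
    rw [hp, sqprod_natDegree]; omega
  have hzero : ∀ j, p.eval (r j) = 0 := by
    intro j
    rw [hp, eval_prod]
    refine Finset.prod_eq_zero (Finset.mem_image_of_mem r (Finset.mem_univ j)) ?_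
    simp
  have := h.2.2.2 p hdeg
  rw [Finset.sum_congr rfl (fun j _ => by rw [hzero j, mul_zero]), Finset.sum_const,
    smul_zero] at this
  exact absurd this (ne_of_gt (integral_poly_pos hw (sqprod_monic S id).ne_zero
    (fun x _ => by simpa using sqprod_eval_nonneg S id x)))

lemma quad_pos_weights {q : ℕ} {w : ℝ → ℝ} {ω r : Fin (q + 1) → ℝ}
    (hw : IsWeight w) (h : IsGaussRadauQuad q w ω r) : ∀ j, 0 < ω j := by
  intro j
  have hsm := quad_strictMono hw h
  set p := ∏ i ∈ Finset.univ.erase j, ((X - C (r i)) ^ 2) with hp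
  have hdeg : p.natDegree ≤ 2 * q := by
    rw [hp, sqprod_natDegree, Finset.card_erase_of_mem (Finset.mem_univ j)]
    simp
  have hzero : ∀ k, k ≠ j → p.eval (r k) = 0 := by
    intro k hk
    rw [hp, eval_prod]
    refine Finset.prod_eq_zero (Finset.mem_erase.2 ⟨hk, Finset.mem_univ k⟩) ?_
    simp
  have hevalj : 0 < p.eval (r j) := by
    rw [hp, sqprod_eval]
    refine Finset.prod_pos fun i hi => ?_
    have hne : r j - r i ≠ 0 := sub_ne_zero.2
      fun hc => (Finset.mem_erase.1 hi).1 (hsm.injective hc.symm)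
    positivity
  have hsum := h.2.2.2 p hdeg
  rw [Finset.sum_eq_single j (fun k _ hk => by rw [hzero k hk, mul_zero]) (by simp)] at hsum
  have hpos := integral_poly_pos hw (sqprod_monic (Finset.univ.erase j) r).ne_zero
    (fun x _ => sqprod_eval_nonneg (Finset.univ.erase j) r x)
  rw [hsum] at hpos
  nlinarith [hevalj, hpos]

lemma linprod_monic {ι : Type*} (S : Finset ι) (f : ι → ℝ) :
    (∏ i ∈ S, (X - C (f i))).Monic :=
  monic_prod_of_monic _ _ fun i _ => monic_X_sub_C (f i)

lemma linprod_natDegree {ι : Type*} (S : Finset ι) (f : ι → ℝ) :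
    (∏ i ∈ S, (X - C (f i))).natDegree = S.card := by
  rw [Polynomial.natDegree_prod _ _ (fun i _ => X_sub_C_ne_zero (f i))]
  simp [natDegree_X_sub_C]

lemma strictMono_eq_of_multiset_map_eq {q : ℕ} {f g : Fin q → ℝ}
    (hf : StrictMono f) (hg : StrictMono g)
    (h : Multiset.map f (Finset.univ : Finset (Fin q)).val
       = Multiset.map g (Finset.univ : Finset (Fin q)).val) : f = g := by
  have huniv : (Finset.univ : Finset (Fin q)).val = ↑(List.finRange q) := by
    rw [Fin.univ_def]
  rw [huniv] at h
  have h2 : ((List.finRange q).map f : Multiset ℝ) = ((List.finRange q).map g : Multiset ℝ) := by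
    simpa [Multiset.map_coe] using h
  have hperm : ((List.finRange q).map f).Perm ((List.finRange q).map g) :=
    Multiset.coe_eq_coe.1 h2
  rw [← List.ofFn_eq_map, ← List.ofFn_eq_map] at hperm
  have := List.Perm.eq_of_sortedLE
    (List.sortedLT_ofFn_iff.2 hf).sortedLE (List.sortedLT_ofFn_iff.2 hg).sortedLE hperm
  exact List.ofFn_inj.1 this

lemma quad_orthogonal {q : ℕ} {w : ℝ → ℝ} {ω r : Fin (q + 1) → ℝ}
    (h : IsGaussRadauQuad q w ω r) (s : Polynomial ℝ)
    (hs : s ≠ 0) (hdeg : s.natDegree + 1 ≤ q) :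
    ∫ x in Set.Ioo (-1:ℝ) 1,
      ((X - C 1) * (∏ i : Fin q, (X - C (r i.castSucc))) * s).eval x * w x = 0 := by
  set ℓ := ∏ i : Fin q, (X - C (r i.castSucc)) with hℓ
  have hd : ((X - C 1) * ℓ * s).natDegree ≤ 2 * q := by
    calc ((X - C 1) * ℓ * s).natDegree
        ≤ ((X - C 1) * ℓ).natDegree + s.natDegree := natDegree_mul_le
      _ ≤ (X - C (1:ℝ)).natDegree + ℓ.natDegree + s.natDegree := by
          exact Nat.add_le_add_right natDegree_mul_le _
      _ ≤ 1 + q + s.natDegree := by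
          rw [natDegree_X_sub_C, hℓ, linprod_natDegree]; simp
      _ ≤ 2 * q := by omega
  rw [h.2.2.2 _ hd]
  rw [Finset.sum_eq_zero]
  intro k _
  rcases eq_or_ne k (Fin.last q) with hk | hk
  · rw [hk, eval_mul, eval_mul, eval_sub, eval_X, eval_C, h.2.2.1]
    ring
  · have hklt : (k : ℕ) < q := by
      rcases lt_or_eq_of_le (Nat.lt_succ_iff.1 k.isLt) with h' | h'
      · exact h'
      · exact absurd (Fin.ext h' : k = Fin.last q) hk
    have hcast : (⟨(k : ℕ), hklt⟩ : Fin q).castSucc = k := by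
      ext; simp
    have : ℓ.eval (r k) = 0 := by
      rw [hℓ, eval_prod]
      refine Finset.prod_eq_zero (Finset.mem_univ (⟨(k : ℕ), hklt⟩ : Fin q)) ?_
      rw [hcast]; simp
    simp [eval_mul, this]

lemma quad_unique {q : ℕ} {w : ℝ → ℝ} {ω r ω' r' : Fin (q + 1) → ℝ}
    (hw : IsWeight w) (h : IsGaussRadauQuad q w ω r) (h' : IsGaussRadauQuad q w ω' r') :
    ω = ω' ∧ r = r' := by
  have hsm := quad_strictMono hw h
  have hsm' := quad_strictMono hw h'
  set ℓ := ∏ i : Fin q, (X - C (r i.castSucc)) with hℓ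
  set ℓ' := ∏ i : Fin q, (X - C (r' i.castSucc)) with hℓ'
  -- Step 1 : ℓ = ℓ'
  have hll : ℓ = ℓ' := by
    by_contra hne
    set d := ℓ - ℓ' with hd
    have hd0 : d ≠ 0 := sub_ne_zero.2 hne
    have hdd : d.natDegree + 1 ≤ q := by
      have hdeg : d.degree < ℓ.degree := by
        refine degree_sub_lt ?_ (linprod_monic _ _).ne_zero ?_
        · rw [degree_eq_natDegree (linprod_monic Finset.univ
              (fun i : Fin q => r i.castSucc)).ne_zero,
            degree_eq_natDegree (linprod_monic Finset.univ
              (fun i : Fin q => r' i.castSucc)).ne_zero,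
            linprod_natDegree, linprod_natDegree]
        · rw [(linprod_monic _ _).leadingCoeff, (linprod_monic _ _).leadingCoeff]
      have := natDegree_lt_natDegree hd0 hdeg
      rw [hℓ, linprod_natDegree, Finset.card_univ, Fintype.card_fin] at this
      omega
    have h1 := quad_orthogonal h d hd0 hdd
    have h2 := quad_orthogonal h' d hd0 hdd
    have hsub : ∫ x in Set.Ioo (-1:ℝ) 1, ((X - C 1) * d * d).eval x * w x = 0 := by
      have hint1 := integrableOn_poly_mul ((X - C 1) * ℓ * d) hw.1
      have hint2 := integrableOn_poly_mul ((X - C 1) * ℓ' * d) hw.1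
      have : ∫ x in Set.Ioo (-1:ℝ) 1,
          (((X - C 1) * ℓ * d).eval x * w x - ((X - C 1) * ℓ' * d).eval x * w x) = 0 := by
        rw [integral_sub hint1 hint2, h1, h2, sub_zero]
      rw [← this]
      refine integral_congr_ae (Filter.Eventually.of_forall fun x => ?_)
      simp only [eval_mul, eval_sub, eval_X, eval_C, hd]
      ring
    have hgpos : 0 < ∫ x in Set.Ioo (-1:ℝ) 1, ((C 1 - X) * d * d).eval x * w x := by
      refine integral_poly_pos hw ?_ ?_
      · refine mul_ne_zero (mul_ne_zero ?_ hd0) hd0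
        intro hc
        have : (X - C (1:ℝ)) = 0 := by
          have := congrArg (fun p => -p) hc
          simpa [neg_sub] using this
        exact X_sub_C_ne_zero 1 this
      · intro x hx
        simp only [eval_mul, eval_sub, eval_X, eval_C]
        have h1x : 0 ≤ 1 - x := by linarith [hx.2]
        nlinarith [sq_nonneg (d.eval x)]
    have : ∫ x in Set.Ioo (-1:ℝ) 1, ((C 1 - X) * d * d).eval x * w x = 0 := by
      rw [← neg_eq_zero, ← integral_neg, ← hsub]
      refine integral_congr_ae (Filter.Eventually.of_forall fun x => ?_)
      simp only [eval_mul, eval_sub, eval_X, eval_C]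
      ring
    exact absurd this (ne_of_gt hgpos)
  -- Step 2 : nodes equal
  have hr : r = r' := by
    have hroots : Multiset.map (fun i : Fin q => r i.castSucc) Finset.univ.val
        = Multiset.map (fun i : Fin q => r' i.castSucc) Finset.univ.val := by
      have e1 : ℓ.roots = Multiset.map (fun i : Fin q => r i.castSucc) Finset.univ.val := by
        rw [hℓ, Finset.prod_eq_multiset_prod]
        rw [show Multiset.map (fun i : Fin q => X - C (r i.castSucc)) Finset.univ.val
            = Multiset.map (fun a => X - C a)
              (Multiset.map (fun i : Fin q => r i.castSucc) Finset.univ.val) by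
          rw [Multiset.map_map]; rfl]
        exact roots_multiset_prod_X_sub_C _
      have e2 : ℓ'.roots = Multiset.map (fun i : Fin q => r' i.castSucc) Finset.univ.val := by
        rw [hℓ', Finset.prod_eq_multiset_prod]
        rw [show Multiset.map (fun i : Fin q => X - C (r' i.castSucc)) Finset.univ.val
            = Multiset.map (fun a => X - C a)
              (Multiset.map (fun i : Fin q => r' i.castSucc) Finset.univ.val) by
          rw [Multiset.map_map]; rfl]
        exact roots_multiset_prod_X_sub_C _
      rw [← e1, ← e2, hll]
    have := strictMono_eq_of_multiset_map_eq
      (hsm.comp Fin.strictMono_castSucc) (hsm'.comp Fin.strictMono_castSucc) hroots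
    funext k
    rcases eq_or_ne k (Fin.last q) with hk | hk
    · rw [hk, h.2.2.1, h'.2.2.1]
    · have hklt : (k : ℕ) < q := by
        rcases lt_or_eq_of_le (Nat.lt_succ_iff.1 k.isLt) with h'' | h''
        · exact h''
        · exact absurd (Fin.ext h'' : k = Fin.last q) hk
      have hcast : (⟨(k : ℕ), hklt⟩ : Fin q).castSucc = k := by ext; simp
      have := congrFun this (⟨(k : ℕ), hklt⟩ : Fin q)
      simpa [hcast] using this
  -- Step 3 : weights equal
  refine ⟨funext fun k => ?_, hr⟩
  set p := ∏ i ∈ Finset.univ.erase k, (X - C (r i)) with hp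
  have hdeg : p.natDegree ≤ 2 * q := by
    rw [hp, linprod_natDegree, Finset.card_erase_of_mem (Finset.mem_univ k)]
    simp; omega
  have hzero : ∀ j, j ≠ k → p.eval (r j) = 0 := by
    intro j hj
    rw [hp, eval_prod]
    exact Finset.prod_eq_zero (Finset.mem_erase.2 ⟨hj, Finset.mem_univ j⟩) (by simp)
  have hevalk : p.eval (r k) ≠ 0 := by
    rw [hp, eval_prod]
    refine Finset.prod_ne_zero_iff.2 fun i hi => ?_
    simp only [eval_sub, eval_X, eval_C]
    exact sub_ne_zero.2 fun hc => (Finset.mem_erase.1 hi).1 (hsm.injective hc.symm)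
  have e1 := h.2.2.2 p hdeg
  have e2 := h'.2.2.2 p hdeg
  rw [Finset.sum_eq_single k (fun j _ hj => by rw [hzero j hj, mul_zero]) (by simp)] at e1
  rw [hr] at hzero hevalk
  rw [Finset.sum_eq_single k (fun j _ hj => by rw [hzero j hj, mul_zero]) (by simp)] at e2
  rw [← hr] at e2
  have := e1.symm.trans e2
  rw [hr] at this
  exact mul_right_cancel₀ hevalk this

lemma moment_tendsto {w : ℕ → ℝ → ℝ} {w₀ : ℝ → ℝ}
    (hw : ∀ n, IsWeight (w n)) (hw₀ : IsWeight w₀)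
    (hconv : Tendsto (fun n => ∫ x in Set.Ioo (-1 : ℝ) 1, |w n x - w₀ x|) atTop (nhds 0))
    (p : Polynomial ℝ) :
    Tendsto (fun n => ∫ x in Set.Ioo (-1 : ℝ) 1, p.eval x * w n x) atTop
      (nhds (∫ x in Set.Ioo (-1 : ℝ) 1, p.eval x * w₀ x)) := by
  obtain ⟨C, hC0, hC⟩ : ∃ C, 0 ≤ C ∧ ∀ x ∈ Set.Icc (-1:ℝ) 1, |p.eval x| ≤ C := by
    obtain ⟨C, hC⟩ := (isCompact_Icc (a := (-1:ℝ)) (b := 1)).exists_bound_of_continuousOn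
      (p.continuous.norm.continuousOn)
    exact ⟨max C 0, le_max_right _ _,
      fun x hx => le_trans (by simpa using hC x hx) (le_max_left _ _)⟩
  rw [tendsto_iff_dist_tendsto_zero]
  have key : ∀ n, dist (∫ x in Set.Ioo (-1:ℝ) 1, p.eval x * w n x)
      (∫ x in Set.Ioo (-1:ℝ) 1, p.eval x * w₀ x)
      ≤ C * ∫ x in Set.Ioo (-1:ℝ) 1, |w n x - w₀ x| := by
    intro n
    have hint1 := integrableOn_poly_mul p (hw n).1
    have hint2 := integrableOn_poly_mul p hw₀.1
    rw [Real.dist_eq, ← integral_sub hint1 hint2, ← Real.norm_eq_abs]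
    have habs : IntegrableOn (fun x => C * |w n x - w₀ x|) (Set.Ioo (-1:ℝ) 1) :=
      (((hw n).1.sub hw₀.1).abs).const_mul C
    calc ‖∫ x in Set.Ioo (-1:ℝ) 1, (p.eval x * w n x - p.eval x * w₀ x)‖
        ≤ ∫ x in Set.Ioo (-1:ℝ) 1, C * |w n x - w₀ x| := by
          refine norm_integral_le_of_norm_le habs ?_
          filter_upwards [ae_restrict_mem measurableSet_Ioo] with x hx
          have h1 : |p.eval x| ≤ C := hC x ⟨le_of_lt hx.1, le_of_lt hx.2⟩
          calc ‖p.eval x * w n x - p.eval x * w₀ x‖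
              = |p.eval x| * |w n x - w₀ x| := by
                rw [← mul_sub, norm_mul]; rfl
            _ ≤ C * |w n x - w₀ x| :=
                mul_le_mul_of_nonneg_right h1 (abs_nonneg _)
      _ = C * ∫ x in Set.Ioo (-1:ℝ) 1, |w n x - w₀ x| := integral_const_mul _ _
  have hub : Tendsto (fun n => C * ∫ x in Set.Ioo (-1:ℝ) 1, |w n x - w₀ x|) atTop (nhds 0) := by
    simpa using hconv.const_mul C
  exact squeeze_zero (fun n => dist_nonneg) key hub


/-- Theorem `t:cd`: continuous dependence of the Gauß–Radau quadrature on the weighting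
function: if `w_n → w₀` in `L¹(-1,1)` (all weights in `W`), then the weights and nodes of
the associated Gauß–Radau quadratures converge to those of `w₀`. -/
theorem stmt_16 (q : ℕ) (w : ℕ → ℝ → ℝ) (w₀ : ℝ → ℝ)
    (hw : ∀ n, IsWeight (w n)) (hw₀ : IsWeight w₀)
    (ω r : ℕ → Fin (q + 1) → ℝ) (ω₀ r₀ : Fin (q + 1) → ℝ)
    (h : ∀ n, IsGaussRadauQuad q (w n) (ω n) (r n))
    (h₀ : IsGaussRadauQuad q w₀ ω₀ r₀)
    (hconv : Tendsto (fun n => ∫ x in Set.Ioo (-1 : ℝ) 1, |w n x - w₀ x|) atTop (nhds 0)) :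
    (∀ j, Tendsto (fun n => ω n j) atTop (nhds (ω₀ j))) ∧
    (∀ j, Tendsto (fun n => r n j) atTop (nhds (r₀ j))) := by
  have hpos : ∀ n j, 0 < ω n j := fun n => quad_pos_weights (hw n) (h n)
  have hsum : ∀ n, ∫ x in Set.Ioo (-1:ℝ) 1, w n x = ∑ j, ω n j := by
    intro n
    simpa using (h n).2.2.2 1 (by simp)
  have htend : Tendsto (fun n => ∑ j, ω n j) atTop
      (nhds (∫ x in Set.Ioo (-1:ℝ) 1, w₀ x)) := by
    have := moment_tendsto hw hw₀ hconv 1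
    simp only [eval_one, one_mul] at this
    simpa [hsum] using this
  obtain ⟨M, hM⟩ := htend.bddAbove_range
  have hub : ∀ n j, ω n j ≤ M := by
    intro n j
    refine le_trans ?_ (hM (Set.mem_range_self n))
    exact Finset.single_le_sum (fun i _ => (hpos n i).le) (Finset.mem_univ j)
  set F : ℕ → (Fin (q+1) → ℝ) × (Fin (q+1) → ℝ) := fun n => (ω n, r n) with hF
  suffices hFt : Tendsto F atTop (nhds (ω₀, r₀)) by
    constructor
    · intro j
      exact (((continuous_apply j).comp continuous_fst).tendsto _).comp hFt
    · intro j
      exact (((continuous_apply j).comp continuous_snd).tendsto _).comp hFt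
  refine tendsto_of_subseq_tendsto fun ns hns => ?_
  set K : Set ((Fin (q+1) → ℝ) × (Fin (q+1) → ℝ)) :=
    (Set.Icc (fun _ => (0:ℝ)) (fun _ => M)) ×ˢ
      (Set.Icc (fun _ => (-1:ℝ)) (fun _ => (1:ℝ))) with hK
  have hKc : IsCompact K := isCompact_Icc.prod isCompact_Icc
  have hmem : ∀ k, F (ns k) ∈ K := by
    intro k
    refine ⟨Set.mem_Icc.2 ⟨fun j => (hpos _ j).le, fun j => hub _ j⟩, ?_⟩
    exact Set.mem_Icc.2 ⟨fun j => ((h _).1 j).1, fun j => ((h _).1 j).2⟩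
  obtain ⟨a, -, φ, hφ, hlim⟩ := hKc.tendsto_subseq hmem
  obtain ⟨ωs, rs⟩ := a
  have hns' : Tendsto (fun k => ns (φ k)) atTop atTop := hns.comp hφ.tendsto_atTop
  have hωs : ∀ j, Tendsto (fun k => ω (ns (φ k)) j) atTop (nhds (ωs j)) := by
    intro j
    have := (((continuous_apply j).comp continuous_fst).tendsto ((ωs, rs) :
      (Fin (q+1) → ℝ) × (Fin (q+1) → ℝ))).comp hlim
    simpa [Function.comp_def, hF] using this
  have hrs : ∀ j, Tendsto (fun k => r (ns (φ k)) j) atTop (nhds (rs j)) := by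
    intro j
    have := (((continuous_apply j).comp continuous_snd).tendsto ((ωs, rs) :
      (Fin (q+1) → ℝ) × (Fin (q+1) → ℝ))).comp hlim
    simpa [Function.comp_def, hF] using this
  have hq : IsGaussRadauQuad q w₀ ωs rs := by
    refine ⟨?_, ?_, ?_, ?_⟩
    · intro j
      exact isClosed_Icc.mem_of_tendsto (hrs j)
        (Filter.Eventually.of_forall fun k => (h _).1 j)
    · intro i j hij
      exact le_of_tendsto_of_tendsto' (hrs i) (hrs j) (fun k => (h _).2.1 hij)
    · have hconst : (fun k => r (ns (φ k)) (Fin.last q)) = fun _ => (1:ℝ) :=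
        funext fun k => (h _).2.2.1
      have := hrs (Fin.last q)
      rw [hconst] at this
      exact (tendsto_nhds_unique this tendsto_const_nhds)
    · intro p hdp
      have t1 := (moment_tendsto hw hw₀ hconv p).comp hns'
      have t2 : Tendsto (fun k => ∑ j, ω (ns (φ k)) j * p.eval (r (ns (φ k)) j)) atTop
          (nhds (∑ j, ωs j * p.eval (rs j))) :=
        tendsto_finset_sum _ fun j _ => (hωs j).mul ((p.continuous.tendsto _).comp (hrs j))
      have heq : (fun k => ∫ x in Set.Ioo (-1:ℝ) 1, p.eval x * w (ns (φ k)) x)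
          = fun k => ∑ j, ω (ns (φ k)) j * p.eval (r (ns (φ k)) j) :=
        funext fun k => (h _).2.2.2 p hdp
      have t1' : Tendsto (fun k => ∑ j, ω (ns (φ k)) j * p.eval (r (ns (φ k)) j)) atTop
          (nhds (∫ x in Set.Ioo (-1:ℝ) 1, p.eval x * w₀ x)) := by
        rw [← heq]; exact t1
      exact tendsto_nhds_unique t1' t2
  obtain ⟨hωeq, hreq⟩ := quad_unique hw₀ hq h₀
  refine ⟨φ, ?_⟩
  have : ((ω₀, r₀) : (Fin (q+1) → ℝ) × (Fin (q+1) → ℝ)) = (ωs, rs) := by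
    rw [hωeq, hreq]
  rw [this]
  exact hlim
end
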